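/- Let κ ∈ 𝐊 and σ̌ > 0. Then f_{κ,σ̌} is concave on [0,∞), satisfies f_{κ,σ̌}(0) = 0, and is continuously differentiable on [0,∞) with derivative f'_{κ,σ̌}(r) = φ(r)·g(r) for every r ≥ 0 (one-sided at r = 0, where f'_{κ,σ̌}(0) = 1). -/

import Mathlib

open Real MeasureTheory Set Filter

noncomputable section

/-- The class `𝐊` of monotonicity profiles: continuous on `(0,∞)`,
`∫₀¹ r (κ r)⁻ dr < ∞` and `liminf_{r→∞} κ(r) > 0`. -/
def memK (κ : ℝ → ℝ) : Prop :=
  ContinuousOn κ (Set.Ioi 0) ∧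
  MeasureTheory.IntegrableOn (fun r => r * max (-κ r) 0) (Set.Ioc 0 1) ∧
  ∃ ε > 0, ∀ᶠ r in Filter.atTop, ε ≤ κ r

/-- The set defining `R₀ = inf {R ≥ 0 : κ(r) ≥ 0 for all r ≥ R}`. -/
def R0set (κ : ℝ → ℝ) : Set ℝ := {R | 0 ≤ R ∧ ∀ r, 0 < r → R ≤ r → 0 ≤ κ r}

def R0 (κ : ℝ → ℝ) : ℝ := sInf (R0set κ)

/-- The set defining `R₁ = inf {R ≥ R₀ : R(R−R₀)·inf_{r ≥ R} κ(r) ≥ 4σ̌²}`. -/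
def R1set (κ : ℝ → ℝ) (σ : ℝ) : Set ℝ :=
  {R | R0 κ ≤ R ∧ ∀ r, 0 < r → R ≤ r → 4 * σ ^ 2 ≤ R * (R - R0 κ) * κ r}

def R1 (κ : ℝ → ℝ) (σ : ℝ) : ℝ := sInf (R1set κ σ)

/-- `φ(r) = exp(−(1/(2σ̌²)) ∫₀ʳ s (κ s)⁻ ds)`. -/
def phiF (κ : ℝ → ℝ) (σ : ℝ) (r : ℝ) : ℝ :=
  Real.exp (-(1 / (2 * σ ^ 2)) * ∫ s in (0:ℝ)..r, s * max (-κ s) 0)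

/-- `Φ(r) = ∫₀ʳ φ(s) ds`. -/
def PhiF (κ : ℝ → ℝ) (σ : ℝ) (r : ℝ) : ℝ := ∫ s in (0:ℝ)..r, phiF κ σ s

/-- `𝒵 = ∫₀^{R₁} Φ(s)/φ(s) ds`. -/
def Zconst (κ : ℝ → ℝ) (σ : ℝ) : ℝ :=
  ∫ s in (0:ℝ)..(R1 κ σ), PhiF κ σ s / phiF κ σ s

/-- `g(r) = 1 − (∫₀^{min(r,R₁)} Φ(s)/φ(s) ds)/(2𝒵)`. -/
def gF (κ : ℝ → ℝ) (σ : ℝ) (r : ℝ) : ℝ :=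
  1 - (∫ s in (0:ℝ)..(min r (R1 κ σ)), PhiF κ σ s / phiF κ σ s) / (2 * Zconst κ σ)

/-- `f_{κ,σ̌}(r) = ∫₀ʳ φ(s) g(s) ds`. -/
def fF (κ : ℝ → ℝ) (σ : ℝ) (r : ℝ) : ℝ := ∫ s in (0:ℝ)..r, phiF κ σ s * gF κ σ s

/-- `λ_{κ,σ̌} = σ̌²/𝒵`. -/
def lamConst (κ : ℝ → ℝ) (σ : ℝ) : ℝ := σ ^ 2 / Zconst κ σ

/-- `C_{κ,σ̌} = φ(R₀)/2`. -/
def CConst (κ : ℝ → ℝ) (σ : ℝ) : ℝ := phiF κ σ (R0 κ) / 2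

namespace Stmt1Aux

/-- Continuity of a primitive on `[0,∞)`. -/
lemma primitive_contOn {f : ℝ → ℝ}
    (hf : ∀ {a b : ℝ}, 0 ≤ a → 0 ≤ b → IntervalIntegrable f volume a b) :
    ContinuousOn (fun r => ∫ s in (0:ℝ)..r, f s) (Ici 0) := by
  intro r hr
  have hr0 : (0:ℝ) ≤ r := hr
  have hint : IntervalIntegrable f volume (min 0 0) (max 0 (r + 1)) := by
    rw [min_self, max_eq_right (by linarith : (0:ℝ) ≤ r + 1)]
    exact hf le_rfl (by linarith)
  have h : ContinuousWithinAt (fun r => ∫ s in (0:ℝ)..r, f s) (Icc 0 (r + 1)) r :=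
    intervalIntegral.continuousWithinAt_primitive (measure_singleton r) hint
  refine h.mono_of_mem_nhdsWithin ?_
  rw [← Ici_inter_Iic]
  exact inter_mem self_mem_nhdsWithin
    (mem_nhdsWithin_of_mem_nhds (Iic_mem_nhds (by linarith)))

/-- Monotonicity of a primitive of a nonnegative function on `[0,∞)`. -/
lemma primitive_monoOn {f : ℝ → ℝ}
    (hf : ∀ {a b : ℝ}, 0 ≤ a → 0 ≤ b → IntervalIntegrable f volume a b)
    (h0 : ∀ s, 0 ≤ s → 0 ≤ f s) :
    MonotoneOn (fun r => ∫ s in (0:ℝ)..r, f s) (Ici 0) := by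
  intro a ha b hb hab
  have ha0 : (0:ℝ) ≤ a := ha
  have hb0 : (0:ℝ) ≤ b := hb
  have key : (∫ s in (0:ℝ)..b, f s) - (∫ s in (0:ℝ)..a, f s) = ∫ s in a..b, f s :=
    intervalIntegral.integral_interval_sub_left (hf le_rfl hb0) (hf le_rfl ha0)
  have hpos : 0 ≤ ∫ s in a..b, f s :=
    intervalIntegral.integral_nonneg hab fun u hu => h0 u (ha0.trans hu.1)
  simp only
  linarith

end Stmt1Aux

/-- `f_{κ,σ̌}` is concave on `[0,∞)`, vanishes at `0`, and is continuously
differentiable on `[0,∞)` with derivative `φ·g` (one-sided at `0`), where `f'(0) = 1`. -/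
theorem stmt1 (κ : ℝ → ℝ) (σ : ℝ) (hκ : memK κ) (hσ : 0 < σ) :
    ConcaveOn ℝ (Set.Ici 0) (fF κ σ) ∧
    fF κ σ 0 = 0 ∧
    (∀ r ∈ Set.Ici (0:ℝ),
      HasDerivWithinAt (fF κ σ) (phiF κ σ r * gF κ σ r) (Set.Ici 0) r) ∧
    ContinuousOn (fun r => phiF κ σ r * gF κ σ r) (Set.Ici 0) ∧
    phiF κ σ 0 * gF κ σ 0 = 1 := by
  obtain ⟨hκc, hκi, -⟩ := hκ
  -- the negative-part integrand
  set h : ℝ → ℝ := fun s => s * max (-κ s) 0 with hh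
  have hcont : ContinuousOn h (Ioi 0) :=
    continuousOn_id.mul ((continuous_id.max continuous_const).comp_continuousOn hκc.neg)
  have hnonneg : ∀ s : ℝ, 0 ≤ s → 0 ≤ h s := fun s hs =>
    mul_nonneg hs (le_max_right _ _)
  have hint : ∀ {a b : ℝ}, 0 ≤ a → 0 ≤ b → IntervalIntegrable h volume a b := by
    intro a b ha hb
    set T : ℝ := max (max a b) 1 with hT
    have hT1 : (1:ℝ) ≤ T := le_max_right _ _
    have h1T : IntegrableOn h (Ioc 1 T) := by
      have hc : ContinuousOn h (Icc 1 T) :=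
        hcont.mono fun x hx => lt_of_lt_of_le one_pos hx.1
      exact hc.integrableOn_Icc.mono_set Ioc_subset_Icc_self
    have hIT : IntegrableOn h (Ioc 0 T) := by
      rw [← Ioc_union_Ioc_eq_Ioc (by norm_num : (0:ℝ) ≤ 1) hT1]
      exact hκi.union h1T
    rw [intervalIntegrable_iff]
    exact hIT.mono_set fun x hx =>
      ⟨lt_of_le_of_lt (le_min ha hb) hx.1, hx.2.trans (le_max_left _ _)⟩
  -- φ
  have φpos : ∀ r, 0 < phiF κ σ r := fun r => Real.exp_pos _
  have Hcont : ContinuousOn (fun r => ∫ s in (0:ℝ)..r, h s) (Ici 0) :=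
    Stmt1Aux.primitive_contOn fun ha hb => hint ha hb
  have φcont : ContinuousOn (phiF κ σ) (Ici 0) := by
    have : ContinuousOn (fun r => Real.exp (-(1 / (2 * σ ^ 2)) * ∫ s in (0:ℝ)..r, h s))
        (Ici 0) := Real.continuous_exp.comp_continuousOn (continuousOn_const.mul Hcont)
    exact this
  have φanti : AntitoneOn (phiF κ σ) (Ici 0) := by
    intro a ha b hb hab
    have ha0 : (0:ℝ) ≤ a := ha
    have hb0 : (0:ℝ) ≤ b := hb
    have key : (∫ s in (0:ℝ)..b, h s) - (∫ s in (0:ℝ)..a, h s) = ∫ s in a..b, h s :=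
      intervalIntegral.integral_interval_sub_left (hint le_rfl hb0) (hint le_rfl ha0)
    have hpos : 0 ≤ ∫ s in a..b, h s :=
      intervalIntegral.integral_nonneg hab fun u hu => hnonneg u (ha0.trans hu.1)
    have hmono : (∫ s in (0:ℝ)..a, h s) ≤ ∫ s in (0:ℝ)..b, h s := by linarith
    have hcpos : (0:ℝ) < 1 / (2 * σ ^ 2) := by positivity
    simp only [phiF]
    exact Real.exp_le_exp.mpr (by nlinarith)
  have φint : ∀ {a b : ℝ}, 0 ≤ a → 0 ≤ b → IntervalIntegrable (phiF κ σ) volume a b := by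
    intro a b ha hb
    exact (φcont.mono fun x hx => (le_min ha hb).trans hx.1).intervalIntegrable
  -- Φ
  have Φcont : ContinuousOn (PhiF κ σ) (Ici 0) :=
    Stmt1Aux.primitive_contOn fun ha hb => φint ha hb
  have Φnonneg : ∀ r : ℝ, 0 ≤ r → 0 ≤ PhiF κ σ r := fun r hr =>
    intervalIntegral.integral_nonneg hr fun u _ => (φpos u).le
  -- q = Φ/φ
  set q : ℝ → ℝ := fun s => PhiF κ σ s / phiF κ σ s with hq
  have qcont : ContinuousOn q (Ici 0) := Φcont.div φcont fun x _ => (φpos x).ne'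
  have qnonneg : ∀ s : ℝ, 0 ≤ s → 0 ≤ q s := fun s hs =>
    div_nonneg (Φnonneg s hs) (φpos s).le
  have qint : ∀ {a b : ℝ}, 0 ≤ a → 0 ≤ b → IntervalIntegrable q volume a b := by
    intro a b ha hb
    exact (qcont.mono fun x hx => (le_min ha hb).trans hx.1).intervalIntegrable
  -- G
  set G : ℝ → ℝ := fun r => ∫ s in (0:ℝ)..r, q s with hGdef
  have Gcont : ContinuousOn G (Ici 0) := Stmt1Aux.primitive_contOn fun ha hb => qint ha hb
  have Gmono : MonotoneOn G (Ici 0) :=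
    Stmt1Aux.primitive_monoOn (fun ha hb => qint ha hb) qnonneg
  have Gnonneg : ∀ r : ℝ, 0 ≤ r → 0 ≤ G r := fun r hr =>
    intervalIntegral.integral_nonneg hr fun u hu => qnonneg u hu.1
  have hR0 : 0 ≤ R0 κ := Real.sInf_nonneg fun x hx => hx.1
  have hR1 : 0 ≤ R1 κ σ := Real.sInf_nonneg fun x hx => hR0.trans hx.1
  have hZG : Zconst κ σ = G (R1 κ σ) := rfl
  have hZ : 0 ≤ Zconst κ σ := by rw [hZG]; exact Gnonneg _ hR1
  have hgG : ∀ r : ℝ, gF κ σ r = 1 - G (min r (R1 κ σ)) / (2 * Zconst κ σ) := fun r => rfl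
  have hminmem : ∀ r : ℝ, 0 ≤ r → min r (R1 κ σ) ∈ Ici (0:ℝ) := fun r hr => le_min hr hR1
  have hGle : ∀ r : ℝ, 0 ≤ r → G (min r (R1 κ σ)) ≤ Zconst κ σ := by
    intro r hr
    rw [hZG]
    exact Gmono (hminmem r hr) hR1 (min_le_right _ _)
  -- bounds on g
  have g_le_one : ∀ r : ℝ, 0 ≤ r → gF κ σ r ≤ 1 := by
    intro r hr
    rw [hgG]
    have : 0 ≤ G (min r (R1 κ σ)) / (2 * Zconst κ σ) :=
      div_nonneg (Gnonneg _ (hminmem r hr)) (by linarith)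
    linarith
  have g_nonneg : ∀ r : ℝ, 0 ≤ r → 0 ≤ gF κ σ r := by
    intro r hr
    rw [hgG]
    rcases hZ.eq_or_lt with h0 | hZpos
    · rw [← h0]
      norm_num
    · have h2 : G (min r (R1 κ σ)) / (2 * Zconst κ σ) ≤ Zconst κ σ / (2 * Zconst κ σ) :=
        (div_le_div_iff_of_pos_right (by linarith)).mpr (hGle r hr)
      have h3 : Zconst κ σ / (2 * Zconst κ σ) = 1 / 2 := by
        rw [mul_comm, ← div_div, div_self hZpos.ne']
      rw [h3] at h2
      linarith
  have g_anti : AntitoneOn (gF κ σ) (Ici 0) := by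
    intro a ha b hb hab
    rw [hgG, hgG]
    rcases hZ.eq_or_lt with h0 | hZpos
    · rw [← h0]; norm_num
    · have : G (min a (R1 κ σ)) / (2 * Zconst κ σ) ≤ G (min b (R1 κ σ)) / (2 * Zconst κ σ) :=
        (div_le_div_iff_of_pos_right (by linarith)).mpr
          (Gmono (hminmem a ha) (hminmem b hb) (min_le_min hab le_rfl))
      linarith
  have g_cont : ContinuousOn (gF κ σ) (Ici 0) := by
    have hmin : ContinuousOn (fun r : ℝ => min r (R1 κ σ)) (Ici 0) :=
      (continuous_id.min continuous_const).continuousOn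
    have hGc : ContinuousOn (fun r : ℝ => G (min r (R1 κ σ))) (Ici 0) :=
      Gcont.comp hmin fun r hr => hminmem r hr
    have : ContinuousOn (fun r : ℝ => 1 - G (min r (R1 κ σ)) / (2 * Zconst κ σ)) (Ici 0) :=
      continuousOn_const.sub (hGc.div_const _)
    exact this.congr fun r _ => hgG r
  -- φ·g
  have fgcont : ContinuousOn (fun r => phiF κ σ r * gF κ σ r) (Ici 0) := φcont.mul g_cont
  have fganti : AntitoneOn (fun r => phiF κ σ r * gF κ σ r) (Ici 0) := by
    intro a ha b hb hab
    calc phiF κ σ b * gF κ σ b ≤ phiF κ σ b * gF κ σ a :=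
          mul_le_mul_of_nonneg_left (g_anti ha hb hab) (φpos b).le
      _ ≤ phiF κ σ a * gF κ σ a :=
          mul_le_mul_of_nonneg_right (φanti ha hb hab) (g_nonneg a ha)
  have fgint : ∀ {b : ℝ}, 0 ≤ b →
      IntervalIntegrable (fun r => phiF κ σ r * gF κ σ r) volume 0 b := by
    intro b hb
    exact (fgcont.mono fun x hx => (le_min le_rfl hb).trans hx.1).intervalIntegrable
  -- derivative
  have hderiv : ∀ r ∈ Ici (0:ℝ),
      HasDerivWithinAt (fF κ σ) (phiF κ σ r * gF κ σ r) (Ici 0) r := by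
    intro r hr
    rcases (mem_Ici.mp hr).eq_or_lt with h0 | hpos
    · rw [← h0]
      exact intervalIntegral.integral_hasDerivWithinAt_right (fgint le_rfl)
        ((fgcont.mono Ioi_subset_Ici_self).stronglyMeasurableAtFilter_nhdsWithin
          measurableSet_Ioi 0)
        ((fgcont 0 Set.self_mem_Ici).mono Ioi_subset_Ici_self)
    · have hmeas : StronglyMeasurableAtFilter (fun r => phiF κ σ r * gF κ σ r) (nhds r) :=
        (fgcont.mono Ioi_subset_Ici_self).stronglyMeasurableAtFilter isOpen_Ioi r hpos
      have hca : ContinuousAt (fun r => phiF κ σ r * gF κ σ r) r :=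
        (fgcont.mono Ioi_subset_Ici_self).continuousAt (Ioi_mem_nhds hpos)
      exact (intervalIntegral.integral_hasDerivAt_right (fgint hr) hmeas hca).hasDerivWithinAt
  have fFcont : ContinuousOn (fF κ σ) (Ici 0) := fun r hr =>
    (hderiv r hr).continuousWithinAt
  -- concavity
  have hconc : ConcaveOn ℝ (Set.Ici 0) (fF κ σ) := by
    apply AntitoneOn.concaveOn_of_deriv (convex_Ici 0) fFcont
    · rw [interior_Ici]
      intro r hr
      exact ((hderiv r (mem_Ici.mpr (le_of_lt hr))).hasDerivAt (Ici_mem_nhds hr)).differentiableAt.differentiableWithinAt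
    · rw [interior_Ici]
      intro a ha b hb hab
      rw [((hderiv a (mem_Ici.mpr (le_of_lt ha))).hasDerivAt (Ici_mem_nhds ha)).deriv,
        ((hderiv b (mem_Ici.mpr (le_of_lt hb))).hasDerivAt (Ici_mem_nhds hb)).deriv]
      exact fganti (mem_Ici.mpr (le_of_lt ha)) (mem_Ici.mpr (le_of_lt hb)) hab
  refine ⟨hconc, intervalIntegral.integral_same, hderiv, fgcont, ?_⟩
  have : min (0:ℝ) (R1 κ σ) = 0 := min_eq_left hR1
  simp [phiF, gF, this, intervalIntegral.integral_same]
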